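/- Let c ∈ (1, ∞), σ > 0, and z ∈ ℂ with z ≠ 0. Let s ∈ ℂ be any complex number with s² = (1/z − cσ² + σ²)² − 4σ²/z, define m_P := −(1/z)·(1 + (−1/z + (c−1)σ² + s)/(2σ²c)), and set m := z(c⁻¹ − 2 − z·m_P). Then m satisfies the Marchenko–Pastur equation m·(σ²(1 − c − c·m/z) − 1/z) = 1. -/

import Mathlib

theorem stmt_3 (c σ : ℝ) (hc : 1 < c) (hσ : 0 < σ) (z : ℂ) (hz : z ≠ 0)
    (s mP m : ℂ)
    (hs : s ^ 2 = (1 / z - (c : ℂ) * (σ : ℂ) ^ 2 + (σ : ℂ) ^ 2) ^ 2 - 4 * (σ : ℂ) ^ 2 / z)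
    (hmP : mP = -(1 / z) * (1 + (-(1 / z) + ((c : ℂ) - 1) * (σ : ℂ) ^ 2 + s)
      / (2 * (σ : ℂ) ^ 2 * (c : ℂ))))
    (hm : m = z * ((c : ℂ)⁻¹ - 2 - z * mP)) :
    m * ((σ : ℂ) ^ 2 * (1 - (c : ℂ) - (c : ℂ) * m / z) - 1 / z) = 1 := by
  have hc0 : (c : ℂ) ≠ 0 := Complex.ofReal_ne_zero.mpr (by linarith)
  have hσ0 : (σ : ℂ) ≠ 0 := Complex.ofReal_ne_zero.mpr (by linarith)
  have key : m = (-(1:ℂ) + (σ:ℂ)^2*(1-c)*z + s*z) / (2*(σ:ℂ)^2*c) := by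
    rw [hm, hmP]; field_simp; ring_nf
  have hs' : s ^ 2 * z ^ 2 = (1 - (c : ℂ) * (σ : ℂ) ^ 2 * z + (σ : ℂ) ^ 2 * z) ^ 2
      - 4 * (σ : ℂ) ^ 2 * z := by
    field_simp at hs
    apply mul_right_cancel₀ hz
    linear_combination z * hs
  have hd : (2*(σ:ℂ)^2*(c:ℂ)) * (2*(σ:ℂ)^2*(c:ℂ))⁻¹ = 1 :=
    mul_inv_cancel₀ (by simp [hσ0, hc0])
  have h3 : m * ((σ:ℂ)^2 * (z - (c:ℂ)*z - (c:ℂ)*m) - 1) = z := by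
    rw [key]
    linear_combination (z - (2*(σ:ℂ)^2*(c:ℂ))⁻¹ *
        (-(1:ℂ) + (σ:ℂ)^2*(1-c)*z + s*z)^2 / 2) * hd
      - ((2*(σ:ℂ)^2*(c:ℂ))⁻¹ / 2) * hs'
  have hzz : z * z⁻¹ = 1 := mul_inv_cancel₀ hz
  linear_combination z⁻¹ * h3 - ((σ:ℂ)^2*(1-(c:ℂ))*m - 1) * hzz
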